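/- Let E be a 2-coloured graph and C a complete collection of squares in E. Suppose z = z₁…zₙ ∈ E* is a path of length n ≥ 2 whose last two edges have colours c(z_{n−1}) = c_b and c(zₙ) = c_a, and suppose z traverses a C-compatible coloured-graph morphism λ : E_{d*(z)} → E. Write d*(z) = u·b·a for u ∈ BS(2,1)⁺ (so that d*(z) = u·a·b² in BS(2,1)⁺). Then the path z₁…z_{n−2}·λ(u, ua)·λ(ua, uab)·λ(uab, uab²) also traverses λ. -/

import Mathlib

/-- The single defining relation of `BS(2,1)⁺`: `a·b·b ~ b·a`
(generator `false` is `a`, generator `true` is `b`). -/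
def bsStep : FreeMonoid Bool → FreeMonoid Bool → Prop := fun x y =>
  x = .of false * .of true * .of true ∧ y = .of true * .of false

/-- The Baumslag–Solitar monoid `BS(2,1)⁺ = ⟨a, b ∣ a b² = b a⟩`. -/
abbrev BS : Type := PresentedMonoid bsStep

/-- The generator `a` of `BS(2,1)⁺`. -/
def BSa : BS := PresentedMonoid.of bsStep false

/-- The generator `b` of `BS(2,1)⁺`. -/
def BSb : BS := PresentedMonoid.of bsStep true

/-- The defining relation `a b² = b a` in `BS(2,1)⁺`. -/
theorem bs_rel : BSa * BSb * BSb = BSb * BSa :=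
  Quotient.sound (ConGen.Rel.of _ _ ⟨rfl, rfl⟩)

/-- The generator of `BS(2,1)⁺` corresponding to a colour. -/
def bsGen : Bool → BS
  | false => BSa
  | true => BSb

/-- A 2-coloured graph: a directed graph `(E⁰, E¹, r, s)` together with a colour map
`c : E¹ → Bool` (`false` is the first colour, `true` the second). -/
structure TwoColouredGraph where
  V : Type
  Edge : Type
  r : Edge → V
  s : Edge → V
  c : Edge → Bool

/-- A coloured-graph morphism: a graph morphism preserving colours. -/
structure CGMor (F E : TwoColouredGraph) where
  onV : F.V → E.V
  onE : F.Edge → E.Edge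
  map_r : ∀ e, E.r (onE e) = onV (F.r e)
  map_s : ∀ e, E.s (onE e) = onV (F.s e)
  map_c : ∀ e, E.c (onE e) = F.c e

/-- `x` is a path (finite sequence of composable edges) with range `v`;
vertices are regarded as the paths of length 0. -/
def IsPathFrom (E : TwoColouredGraph) (v : E.V) (x : List E.Edge) : Prop :=
  (∀ e ∈ x.head?, E.r e = v) ∧ List.Chain' (fun e f => E.s e = E.r f) x

/-- The model 2-coloured graph `E_w` for `w ∈ BS(2,1)⁺`: vertices are the left divisors
of `w`, and there is an edge `(z, z·l)` of colour `l` whenever `z` and `z·l` divide `w`. -/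
def bsModel (w : BS) : TwoColouredGraph where
  V := {z : BS // z ∣ w}
  Edge := {p : BS × Bool // p.1 ∣ w ∧ p.1 * bsGen p.2 ∣ w}
  r e := ⟨e.1.1, e.2.1⟩
  s e := ⟨e.1.1 * bsGen e.1.2, e.2.2⟩
  c e := e.1.2

/-- The degree `d*(x) ∈ BS(2,1)⁺` of a path: the product of the generators
corresponding to the colours of its edges. -/
def pathDegBS (E : TwoColouredGraph) (x : List E.Edge) : BS :=
  (x.map fun e => bsGen (E.c e)).prod

theorem pathDegBS_take_mul_drop (E : TwoColouredGraph) (x : List E.Edge) (n : ℕ) :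
    pathDegBS E (x.take n) * pathDegBS E (x.drop n) = pathDegBS E x := by
  unfold pathDegBS
  rw [← List.prod_append, ← List.map_append, List.take_append_drop]

theorem pathDegBS_take_dvd (E : TwoColouredGraph) (x : List E.Edge) (n : ℕ) :
    pathDegBS E (x.take n) ∣ pathDegBS E x :=
  ⟨pathDegBS E (x.drop n), (pathDegBS_take_mul_drop E x n).symm⟩

theorem pathDegBS_take_mul_gen_dvd (E : TwoColouredGraph) (x : List E.Edge) (n : ℕ)
    (hn : n < x.length) :
    pathDegBS E (x.take n) * bsGen (E.c (x.get ⟨n, hn⟩)) ∣ pathDegBS E x := by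
  refine ⟨pathDegBS E (x.drop (n + 1)), ?_⟩
  rw [mul_assoc, ← pathDegBS_take_mul_drop E x n]
  congr 1
  have h := List.drop_eq_getElem_cons hn
  rw [pathDegBS, pathDegBS, h, List.map_cons, List.prod_cons, List.get_eq_getElem]

/-- `x` (a path with range `v`) traverses the coloured-graph morphism `λ : E_w → E`. -/
def TraversesBS (E : TwoColouredGraph) {w : BS} (lam : CGMor (bsModel w) E)
    (v : E.V) (x : List E.Edge) : Prop :=
  ∃ hd : pathDegBS E x = w,
    lam.onV ⟨1, one_dvd w⟩ = v ∧
    ∀ (n : ℕ) (hn : n < x.length),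
      lam.onE ⟨(pathDegBS E (x.take n), E.c (x.get ⟨n, hn⟩)),
        hd ▸ pathDegBS_take_dvd E x n,
        hd ▸ pathDegBS_take_mul_gen_dvd E x n hn⟩ = x.get ⟨n, hn⟩

/-- The restriction `λ|_{E_{w₁}}` of `λ : E_w → E` along a divisor `w₁ ∣ w`. -/
def restrictBS {E : TwoColouredGraph} {w : BS} (lam : CGMor (bsModel w) E)
    (w₁ : BS) (h : w₁ ∣ w) : CGMor (bsModel w₁) E where
  onV z := lam.onV ⟨z.1, z.2.trans h⟩
  onE e := lam.onE ⟨e.1, e.2.1.trans h, e.2.2.trans h⟩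
  map_r e := lam.map_r _
  map_s e := lam.map_s _
  map_c e := lam.map_c _

/-- The translated restriction `λ|*_{[w₁, w₁w₂]} : E_{w₂} → E`, `z ↦ λ(w₁ z)`,
of `λ : E_w → E` where `w = w₁ w₂`. -/
def starRestrictBS {E : TwoColouredGraph} {w : BS} (lam : CGMor (bsModel w) E)
    (w₁ w₂ : BS) (h : w = w₁ * w₂) : CGMor (bsModel w₂) E where
  onV z := lam.onV ⟨w₁ * z.1, (mul_dvd_mul_left w₁ z.2).trans (dvd_of_eq h.symm)⟩
  onE e := lam.onE ⟨(w₁ * e.1.1, e.1.2),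
    (mul_dvd_mul_left w₁ e.2.1).trans (dvd_of_eq h.symm),
    by rw [mul_assoc]; exact (mul_dvd_mul_left w₁ e.2.2).trans (dvd_of_eq h.symm)⟩
  map_r e := lam.map_r _
  map_s e := by
    exact (lam.map_s _).trans
      (congrArg lam.onV (Subtype.ext (mul_assoc w₁ e.1.1 (bsGen e.1.2))))
  map_c e := lam.map_c _

/-- A square in `E`: a coloured-graph morphism `φ : E_{ba} → E`. -/
abbrev SquareBS (E : TwoColouredGraph) := CGMor (bsModel (BSb * BSa)) E

theorem dvd_a_ba : BSa ∣ BSb * BSa := ⟨BSb * BSb, by rw [← mul_assoc, bs_rel]⟩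
theorem dvd_ab_ba : BSa * BSb ∣ BSb * BSa := ⟨BSb, bs_rel.symm⟩
theorem dvd_b_ba : BSb ∣ BSb * BSa := ⟨BSa, rfl⟩

/-- The edge `(e, a)` of `E_{ba}`. -/
def sqEdge_e_a : (bsModel (BSb * BSa)).Edge :=
  ⟨(1, false), one_dvd _, by rw [one_mul]; exact dvd_a_ba⟩

/-- The edge `(a, ab)` of `E_{ba}`. -/
def sqEdge_a_ab : (bsModel (BSb * BSa)).Edge := ⟨(BSa, true), dvd_a_ba, dvd_ab_ba⟩

/-- The edge `(ab, ab²)` of `E_{ba}`. -/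
def sqEdge_ab_abb : (bsModel (BSb * BSa)).Edge := ⟨(BSa * BSb, true), dvd_ab_ba, dvd_of_eq bs_rel⟩

/-- The edge `(e, b)` of `E_{ba}`. -/
def sqEdge_e_b : (bsModel (BSb * BSa)).Edge :=
  ⟨(1, true), one_dvd _, by rw [one_mul]; exact dvd_b_ba⟩

/-- The edge `(b, ba)` of `E_{ba}`. -/
def sqEdge_b_ba : (bsModel (BSb * BSa)).Edge := ⟨(BSb, false), dvd_b_ba, dvd_refl _⟩

/-- A collection `C` of squares in `E` is complete if every `c_a c_b c_b`-coloured path is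
the top-plus-right side of a unique square in `C`, and every `c_b c_a`-coloured path is
the left-plus-bottom side of a unique square in `C`. -/
def IsCompleteBS (E : TwoColouredGraph) (C : Set (SquareBS E)) : Prop :=
  (∀ x₁ x₂ x₃ : E.Edge, E.s x₁ = E.r x₂ → E.s x₂ = E.r x₃ →
      E.c x₁ = false → E.c x₂ = true → E.c x₃ = true →
      ∃! φ : SquareBS E, φ ∈ C ∧ x₁ = φ.onE sqEdge_e_a ∧ x₂ = φ.onE sqEdge_a_ab ∧
        x₃ = φ.onE sqEdge_ab_abb) ∧
  (∀ y₁ y₂ : E.Edge, E.s y₁ = E.r y₂ → E.c y₁ = true → E.c y₂ = false →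
      ∃! φ : SquareBS E, φ ∈ C ∧ y₁ = φ.onE sqEdge_e_b ∧ y₂ = φ.onE sqEdge_b_ba)

/-- The square `φ` occurs in `λ : E_w → E` if there is an `m ∈ BS(2,1)⁺` such that `φ` is the
translated restriction of `λ` to the copy `[m, m·ba]` of `E_{ba}` inside `E_w`. -/
def OccursBS {E : TwoColouredGraph} {w : BS} (φ : SquareBS E) (lam : CGMor (bsModel w) E) : Prop :=
  ∃ (m : BS) (h : m * (BSb * BSa) ∣ w),
    (∀ z : (bsModel (BSb * BSa)).V,
      lam.onV ⟨m * z.1, (mul_dvd_mul_left m z.2).trans h⟩ = φ.onV z) ∧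
    (∀ e : (bsModel (BSb * BSa)).Edge,
      lam.onE ⟨(m * e.1.1, e.1.2), (mul_dvd_mul_left m e.2.1).trans h,
        by rw [mul_assoc]; exact (mul_dvd_mul_left m e.2.2).trans h⟩ = φ.onE e)

/-- `λ` is `C`-compatible if every square occurring in `λ` belongs to `C`. -/
def CompatibleBS {E : TwoColouredGraph} (C : Set (SquareBS E)) {w : BS}
    (lam : CGMor (bsModel w) E) : Prop :=
  ∀ φ : SquareBS E, OccursBS φ lam → φ ∈ C

/-- The monoid homomorphism `BS(2,1)⁺ → (ℕ, ×)` killing both generators. -/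
def bsToNat : BS →* ℕ :=
  PresentedMonoid.lift (fun _ => (0 : ℕ)) (by
    rintro x y ⟨hx, hy⟩
    subst hx; subst hy
    simp)

theorem bsToNat_gen (l : Bool) : bsToNat (bsGen l) = 0 := by
  cases l <;> rfl

/-- The model graph `E_e` over the identity of `BS(2,1)⁺` has no edges. -/
theorem bsModel_one_no_edge (e : (bsModel 1).Edge) : False := by
  obtain ⟨u, hu⟩ := e.2.2
  have h := congrArg bsToNat hu
  rw [map_one, map_mul, map_mul, bsToNat_gen, mul_zero, zero_mul] at h
  exact one_ne_zero h

/-- The identity morphism `λ_v : E_e → E`, `λ_v(e) = v`. -/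
def idMorBS (E : TwoColouredGraph) (v : E.V) : CGMor (bsModel 1) E where
  onV _ := v
  onE e := (bsModel_one_no_edge e).elim
  map_r e := (bsModel_one_no_edge e).elim
  map_s e := (bsModel_one_no_edge e).elim
  map_c e := (bsModel_one_no_edge e).elim

theorem idMorBS_compatible (E : TwoColouredGraph) (C : Set (SquareBS E)) (v : E.V) :
    CompatibleBS C (idMorBS E v) := by
  rintro φ ⟨m, h, -, -⟩
  obtain ⟨u, hu⟩ := h
  have h1 := congrArg bsToNat hu
  rw [map_one, map_mul, map_mul, map_mul] at h1
  rw [show bsToNat BSb = 0 from rfl] at h1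
  simp at h1

/-- The set `Λ = ⋃_{w} Λ^w` of all `C`-compatible coloured-graph morphisms into `E`. -/
def LamBS (E : TwoColouredGraph) (C : Set (SquareBS E)) : Type :=
  Σ w : BS, {lam : CGMor (bsModel w) E // CompatibleBS C lam}

/-- The degree `d(λ) = w` of `λ : E_w → E`. -/
def LamBS.deg {E : TwoColouredGraph} {C : Set (SquareBS E)} (α : LamBS E C) : BS := α.1

/-- The range `r(λ) = λ(e)`. -/
def LamBS.rV {E : TwoColouredGraph} {C : Set (SquareBS E)} (α : LamBS E C) : E.V :=
  α.2.1.onV ⟨1, one_dvd α.1⟩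

/-- The source `s(λ) = λ(w)`. -/
def LamBS.sV {E : TwoColouredGraph} {C : Set (SquareBS E)} (α : LamBS E C) : E.V :=
  α.2.1.onV ⟨α.1, dvd_refl α.1⟩

/-- The identity `λ_v` as an element of `Λ`. -/
def idLamBS (E : TwoColouredGraph) (C : Set (SquareBS E)) (v : E.V) : LamBS E C :=
  ⟨1, idMorBS E v, idMorBS_compatible E C v⟩

/-- `γ` is the composition `αβ`, i.e. `d(γ) = d(α)d(β)`, `γ|_{E_{d(α)}} = α` and
`γ|*_{[d(α), d(α)d(β)]} = β`. -/
def IsCompBS {E : TwoColouredGraph} {C : Set (SquareBS E)} (α β γ : LamBS E C) : Prop :=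
  ∃ h : γ.1 = α.1 * β.1,
    restrictBS γ.2.1 α.1 ⟨β.1, h⟩ = α.2.1 ∧ starRestrictBS γ.2.1 α.1 β.1 h = β.2.1

theorem eq_uabb_uba (u : BS) : u * BSa * BSb * BSb = u * BSb * BSa := by
  rw [mul_assoc (u * BSa) BSb BSb, mul_assoc u BSa (BSb * BSb), ← mul_assoc BSa BSb BSb,
    bs_rel, ← mul_assoc]

theorem dvd_u_uba (u : BS) : u ∣ u * BSb * BSa :=
  dvd_mul_of_dvd_left (dvd_mul_right u BSb) BSa

theorem dvd_ua_uba (u : BS) : u * BSa ∣ u * BSb * BSa :=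
  ⟨BSb * BSb, by rw [← mul_assoc, eq_uabb_uba]⟩

theorem dvd_uab_uba (u : BS) : u * BSa * BSb ∣ u * BSb * BSa := ⟨BSb, (eq_uabb_uba u).symm⟩


/-- Type synonym for the semidirect product monoid `ℕ ⋉ ℕ` (with first factor acting by
doubling), used to establish cancellation properties of `BS(2,1)⁺`. -/
def NSemi : Type := ℕ × ℕ

instance : Monoid NSemi where
  mul x y := (x.1 + y.1, x.2 * 2 ^ y.1 + y.2)
  one := (0, 0)
  mul_assoc x y z := by
    show (_, _) = (_, _)
    refine Prod.ext (Nat.add_assoc _ _ _) ?_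
    show (x.2 * 2 ^ y.1 + y.2) * 2 ^ z.1 + z.2 = x.2 * 2 ^ (y.1 + z.1) + (y.2 * 2 ^ z.1 + z.2)
    ring
  one_mul x := by
    show ((0 : ℕ) + x.1, 0 * 2 ^ x.1 + x.2) = x
    simp
    rfl
  mul_one x := by
    show (x.1 + 0, x.2 * 2 ^ 0 + 0) = x
    simp
    rfl

theorem nsemi_mul (x y : NSemi) : x * y = (x.1 + y.1, x.2 * 2 ^ y.1 + y.2) := rfl

/-- The homomorphism `BS(2,1)⁺ → ℕ ⋉ ℕ`, `a ↦ (1,0)`, `b ↦ (0,1)`. -/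
def bsToNSemi : BS →* NSemi :=
  PresentedMonoid.lift (fun l => if l then ((0, 1) : NSemi) else (1, 0)) (by
    rintro x y ⟨hx, hy⟩
    subst hx; subst hy
    simp only [map_mul, FreeMonoid.lift_eval_of]
    rfl)

theorem bsToNSemi_a : bsToNSemi BSa = ((1, 0) : NSemi) := rfl
theorem bsToNSemi_b : bsToNSemi BSb = ((0, 1) : NSemi) := rfl

theorem bs_bpow_a (j : ℕ) : BSb ^ j * BSa = BSa * BSb ^ (2 * j) := by
  induction j with
  | zero => simp
  | succ n ih =>
    rw [pow_succ, mul_assoc, ← bs_rel, ← mul_assoc, ← mul_assoc, ih,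
      mul_assoc BSa, ← pow_succ, mul_assoc BSa, ← pow_succ]
    congr 2

theorem bs_bpow_apow (j i : ℕ) : BSb ^ j * BSa ^ i = BSa ^ i * BSb ^ (j * 2 ^ i) := by
  induction i with
  | zero => simp
  | succ n ih =>
    rw [pow_succ, ← mul_assoc, ih, mul_assoc, bs_bpow_a, ← mul_assoc, ← pow_succ]
    congr 1
    ring

/-- Section `ℕ ⋉ ℕ → BS(2,1)⁺`, `(i,j) ↦ aⁱ bʲ`. -/
def nsemiToBS : NSemi →* BS where
  toFun x := BSa ^ x.1 * BSb ^ x.2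
  map_one' := by show BSa ^ 0 * BSb ^ 0 = 1; simp
  map_mul' x y := by
    show BSa ^ (x.1 + y.1) * BSb ^ (x.2 * 2 ^ y.1 + y.2)
      = (BSa ^ x.1 * BSb ^ x.2) * (BSa ^ y.1 * BSb ^ y.2)
    rw [mul_assoc, ← mul_assoc (BSb ^ x.2), bs_bpow_apow, pow_add, mul_assoc, mul_assoc,
      ← pow_add, mul_comm x.2 (2 ^ y.1), mul_comm (2 ^ y.1) x.2]

theorem nsemiToBS_bsToNSemi (x : BS) : nsemiToBS (bsToNSemi x) = x := by
  have : nsemiToBS.comp bsToNSemi = MonoidHom.id BS := by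
    apply PresentedMonoid.ext
    intro l
    cases l
    · show nsemiToBS (bsToNSemi BSa) = BSa
      show BSa ^ 1 * BSb ^ 0 = BSa
      simp
    · show nsemiToBS (bsToNSemi BSb) = BSb
      show BSa ^ 0 * BSb ^ 1 = BSb
      simp
  exact DFunLike.congr_fun this x

theorem bsToNSemi_injective : Function.Injective bsToNSemi := by
  intro x y h
  rw [← nsemiToBS_bsToNSemi x, ← nsemiToBS_bsToNSemi y, h]

/-- Right cancellation of `b·a` in `BS(2,1)⁺`. -/
theorem bs_cancel_ba {x u : BS} (h : x * BSb * BSa = u * BSb * BSa) : x = u := by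
  apply bsToNSemi_injective
  have h2 := congrArg bsToNSemi h
  simp only [map_mul, bsToNSemi_a, bsToNSemi_b, nsemi_mul] at h2
  have h3 : (bsToNSemi x).1 + 0 + 1 = (bsToNSemi u).1 + 0 + 1 := congrArg Prod.fst h2
  have h4 : ((bsToNSemi x).2 * 2 ^ 0 + 1) * 2 ^ 1 + 0 = ((bsToNSemi u).2 * 2 ^ 0 + 1) * 2 ^ 1 + 0 :=
    congrArg Prod.snd h2
  have h5 : (bsToNSemi x).1 = (bsToNSemi u).1 := by omega
  have h6 : (bsToNSemi x).2 = (bsToNSemi u).2 := by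
    simp only [pow_zero, mul_one, pow_one] at h4
    omega
  exact Prod.ext h5 h6


theorem pathDegBS_append (E : TwoColouredGraph) (x y : List E.Edge) :
    pathDegBS E (x ++ y) = pathDegBS E x * pathDegBS E y := by
  unfold pathDegBS
  rw [List.map_append, List.prod_append]

theorem onE_congr {E : TwoColouredGraph} {w : BS} (lam : CGMor (bsModel w) E)
    {p q : BS × Bool} (h : p = q)
    {h1 : p.1 ∣ w ∧ p.1 * bsGen p.2 ∣ w} {h2 : q.1 ∣ w ∧ q.1 * bsGen q.2 ∣ w} :
    lam.onE ⟨p, h1⟩ = lam.onE ⟨q, h2⟩ := by subst h; rfl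

theorem pathDegBS_take_succ (E : TwoColouredGraph) (x : List E.Edge) (n : ℕ)
    (hn : n < x.length) :
    pathDegBS E (x.take (n + 1))
      = pathDegBS E (x.take n) * bsGen (E.c (x.get ⟨n, hn⟩)) := by
  rw [← List.take_concat_get (l := x) (i := n) hn, List.concat_eq_append]
  unfold pathDegBS
  rw [List.map_append, List.prod_append]
  simp

-- Statement 5
theorem flip_last_square_traverses (E : TwoColouredGraph) (C : Set (SquareBS E))
    (hC : IsCompleteBS E C) (v : E.V) (z : List E.Edge)
    (hlen : 2 ≤ z.length) (hzp : IsPathFrom E v z)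
    (hc1 : E.c (z.get ⟨z.length - 2, by omega⟩) = true)
    (hc2 : E.c (z.get ⟨z.length - 1, by omega⟩) = false)
    (u : BS) (hu : pathDegBS E z = u * BSb * BSa)
    (lam : CGMor (bsModel (pathDegBS E z)) E)
    (hcomp : CompatibleBS C lam)
    (htrav : TraversesBS E lam v z) :
    TraversesBS E lam v (z.take (z.length - 2) ++
      [lam.onE ⟨(u, false), (dvd_u_uba u).trans (dvd_of_eq hu.symm),
          (dvd_ua_uba u).trans (dvd_of_eq hu.symm)⟩,
       lam.onE ⟨(u * BSa, true), (dvd_ua_uba u).trans (dvd_of_eq hu.symm),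
          (dvd_uab_uba u).trans (dvd_of_eq hu.symm)⟩,
       lam.onE ⟨(u * BSa * BSb, true), (dvd_uab_uba u).trans (dvd_of_eq hu.symm),
          dvd_of_eq ((eq_uabb_uba u).trans hu.symm)⟩]) := by
  obtain ⟨hdz, hv, he⟩ := htrav
  set k := z.length - 2 with hk
  set A := lam.onE ⟨(u, false), (dvd_u_uba u).trans (dvd_of_eq hu.symm),
      (dvd_ua_uba u).trans (dvd_of_eq hu.symm)⟩ with hA
  set B := lam.onE ⟨(u * BSa, true), (dvd_ua_uba u).trans (dvd_of_eq hu.symm),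
      (dvd_uab_uba u).trans (dvd_of_eq hu.symm)⟩ with hB
  set C' := lam.onE ⟨(u * BSa * BSb, true), (dvd_uab_uba u).trans (dvd_of_eq hu.symm),
      dvd_of_eq ((eq_uabb_uba u).trans hu.symm)⟩ with hC
  have hk1 : k < z.length := by omega
  have hk2 : k + 1 < z.length := by omega
  have hc1' : E.c (z.get ⟨k, hk1⟩) = true := hc1
  have hc2' : E.c (z.get ⟨k + 1, hk2⟩) = false := by
    have hfin : (⟨k + 1, hk2⟩ : Fin z.length) = ⟨z.length - 1, by omega⟩ :=
      Fin.ext (show k + 1 = z.length - 1 by omega)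
    rw [hfin]; exact hc2
  have hcA : E.c A = false := lam.map_c _
  have hcB : E.c B = true := lam.map_c _
  have hcC : E.c C' = true := lam.map_c _
  have hdeg2 : pathDegBS E z = pathDegBS E (z.take k) * BSb * BSa := by
    have hzz : z.take (k + 1 + 1) = z := by
      rw [show k + 1 + 1 = z.length by omega, List.take_length]
    conv_lhs => rw [← hzz]
    rw [pathDegBS_take_succ E z (k + 1) hk2, pathDegBS_take_succ E z k hk1, hc1', hc2']
    rfl
  have htu : pathDegBS E (z.take k) = u := bs_cancel_ba (hdeg2.symm.trans hu)
  have hplen : (z.take k).length = k := by rw [List.length_take]; omega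
  have hyl : (z.take k ++ [A, B, C']).length = k + 3 := by rw [List.length_append, hplen]; rfl
  have hdy : pathDegBS E (z.take k ++ [A, B, C']) = pathDegBS E z := by
    rw [pathDegBS_append, hdeg2, htu, ← eq_uabb_uba]
    unfold pathDegBS
    simp [hcA, hcB, hcC, bsGen, mul_assoc]
  refine ⟨hdy, hv, ?_⟩
  intro n hn
  have hn3 : n < k + 3 := by rw [← hyl]; exact hn
  rcases lt_or_ge n k with hnk | hnk
  · have hytake : (z.take k ++ [A, B, C']).take n = z.take n := by
      rw [List.take_append_of_le_length (by omega), List.take_take,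
        min_eq_left (le_of_lt hnk)]
    have hyget : (z.take k ++ [A, B, C']).get ⟨n, hn⟩ = z.get ⟨n, by omega⟩ := by
      rw [List.get_eq_getElem, List.getElem_append_left (by rw [hplen]; exact hnk),
        List.getElem_take]
      rfl
    have hmid := he n (show n < z.length by omega)
    refine Eq.trans ?_ (hmid.trans hyget.symm)
    exact onE_congr lam (by rw [hytake, hyget])
  · have hyt : (z.take k ++ [A, B, C']).take k = z.take k := by
      rw [List.take_append_of_le_length (le_of_eq hplen.symm), List.take_take, min_self]
    have hdk : pathDegBS E ((z.take k ++ [A, B, C']).take k) = u := by rw [hyt, htu]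
    have hkl : k < (z.take k ++ [A, B, C']).length := by rw [hyl]; omega
    have hkl1 : k + 1 < (z.take k ++ [A, B, C']).length := by rw [hyl]; omega
    have hkl2 : k + 2 < (z.take k ++ [A, B, C']).length := by rw [hyl]; omega
    have hgA : (z.take k ++ [A, B, C']).get ⟨k, hkl⟩ = A := by
      rw [List.get_eq_getElem, List.getElem_append_right (by rw [hplen])]
      simp [hplen]
    have hgB : (z.take k ++ [A, B, C']).get ⟨k + 1, hkl1⟩ = B := by
      rw [List.get_eq_getElem, List.getElem_append_right (by rw [hplen]; exact Nat.le_succ k)]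
      simp [hplen]
    have hgC : (z.take k ++ [A, B, C']).get ⟨k + 2, hkl2⟩ = C' := by
      rw [List.get_eq_getElem, List.getElem_append_right (by rw [hplen]; exact Nat.le_add_right k 2)]
      simp [hplen]
    have hdk1 : pathDegBS E ((z.take k ++ [A, B, C']).take (k + 1)) = u * BSa := by
      rw [pathDegBS_take_succ E (z.take k ++ [A, B, C']) k hkl, hdk, hgA, hcA]
      rfl
    have hdk2 : pathDegBS E ((z.take k ++ [A, B, C']).take (k + 2)) = u * BSa * BSb := by
      rw [pathDegBS_take_succ E (z.take k ++ [A, B, C']) (k + 1) hkl1, hdk1, hgB, hcB]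
      rfl
    obtain rfl | rfl | rfl : n = k ∨ n = k + 1 ∨ n = k + 2 := by omega
    · refine Eq.trans ?_ hgA.symm
      exact onE_congr lam (by rw [hdk, hgA, hcA])
    · refine Eq.trans ?_ hgB.symm
      exact onE_congr lam (by rw [hdk1, hgB, hcB])
    · refine Eq.trans ?_ hgC.symm
      exact onE_congr lam (by rw [hdk2, hgC, hcC])
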